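/- arXiv:1407.4014 — 2 statements merged into one kernel-verified Lean document; each statement's English description precedes it below -/
import Mathlib

section
/- The intersection of a countable collection {S_i} of α_i-winning sets in a complete metric space, with inf_i α_i = α_0 > 0, is an α_0-winning set. -/
open Metric

/-- Alice has a winning strategy in Schmidt's `(α, β)`-game with target set `S` on a metric
space `X`.  Bob starts with a closed ball of radius `ρ` centred at `x₀`; thereafter Bob's `n`-th
ball has radius `ρ(αβ)ⁿ` and Alice's `n`-th ball has radius `ρα(αβ)ⁿ⁻¹`.  A strategy for Alice
assigns to every (relevant) finite history of Bob's moves her next centre; it must always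
produce a ball contained in Bob's previous ball, and whenever Bob plays legally forever, every
point of the resulting nested intersection belongs to `S`. -/
def IsAlphaBetaWinning {X : Type*} [MetricSpace X] (α β : ℝ) (S : Set X) : Prop :=
  ∀ ρ : ℝ, 0 < ρ → ∀ x₀ : X,
    ∃ a : (ℕ → X) → ℕ → X,
      (∀ bob bob' : ℕ → X, ∀ n : ℕ, (∀ i ≤ n, bob i = bob' i) → a bob n = a bob' n) ∧
      ∀ bob : ℕ → X, bob 0 = x₀ →
        (∀ n : ℕ, closedBall (bob (n + 1)) (ρ * (α * β) ^ (n + 1)) ⊆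
            closedBall (a bob n) (ρ * α * (α * β) ^ n)) →
        (∀ n : ℕ, closedBall (a bob n) (ρ * α * (α * β) ^ n) ⊆
            closedBall (bob n) (ρ * (α * β) ^ n)) ∧
          ∀ z : X, (∀ n : ℕ, z ∈ closedBall (bob n) (ρ * (α * β) ^ n)) → z ∈ S

/-- `S` is `α`-winning for Schmidt's game: Alice wins the `(α, β)`-game for every `β ∈ (0,1)`. -/
def IsAlphaWinning {X : Type*} [MetricSpace X] (α : ℝ) (S : Set X) : Prop :=
  0 < α ∧ α < 1 ∧ ∀ β : ℝ, 0 < β → β < 1 → IsAlphaBetaWinning α β S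

set_option linter.unusedSectionVars false
namespace SchmidtAux

variable {X : Type*}

/-! ### Extending a sequence by repeatedly applying a prefix-consistent function -/

def chainSeq (F : (ℕ → X) → ℕ → X) (b : ℕ → X) (k : ℕ) : ℕ → ℕ → X
  | 0 => b
  | (t+1) => fun m => if m = k + t + 1 then F (chainSeq F b k t) (k + t) else chainSeq F b k t m

def extSeq (F : (ℕ → X) → ℕ → X) (b : ℕ → X) (k : ℕ) : ℕ → X :=
  fun m => chainSeq F b k m m

lemma chainSeq_stable (F : (ℕ → X) → ℕ → X) (b : ℕ → X) (k : ℕ) :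
    ∀ {s t m : ℕ}, m ≤ k + s → s ≤ t → chainSeq F b k t m = chainSeq F b k s m := by
  intro s t
  induction t with
  | zero =>
    intro m _ hst
    obtain rfl : s = 0 := Nat.le_zero.mp hst
    rfl
  | succ t ih =>
    intro m hm hst
    rcases Nat.eq_or_lt_of_le hst with rfl | hlt
    · rfl
    · have hst' : s ≤ t := by omega
      have : m ≠ k + t + 1 := by omega
      simp only [chainSeq, if_neg this]
      exact ih hm hst'

lemma extSeq_eq_of_le (F : (ℕ → X) → ℕ → X) (b : ℕ → X) (k : ℕ) {j : ℕ} (hj : j ≤ k) :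
    extSeq F b k j = b j := by
  have := chainSeq_stable F b k (s := 0) (t := j) (m := j) (by omega) (by omega)
  simpa [extSeq, chainSeq] using this

lemma chainSeq_agree (F : (ℕ → X) → ℕ → X) (b : ℕ → X) (k t : ℕ) :
    ∀ m ≤ k + t, chainSeq F b k t m = extSeq F b k m := by
  intro m hm
  show chainSeq F b k t m = chainSeq F b k m m
  rcases le_or_gt m t with h | h
  · exact chainSeq_stable F b k (s := m) (t := t) (m := m) (Nat.le_add_left m k) h
  · exact (chainSeq_stable F b k (s := t) (t := m) hm h.le).symm

lemma extSeq_succ (F : (ℕ → X) → ℕ → X)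
    (hF : ∀ b b' : ℕ → X, ∀ n : ℕ, (∀ i ≤ n, b i = b' i) → F b n = F b' n)
    (b : ℕ → X) (k : ℕ) {j : ℕ} (hj : k ≤ j) :
    extSeq F b k (j + 1) = F (extSeq F b k) j := by
  obtain ⟨t, rfl⟩ := Nat.exists_eq_add_of_le hj
  have h1 : extSeq F b k (k + t + 1) = chainSeq F b k (t + 1) (k + t + 1) :=
    chainSeq_stable F b k (s := t + 1) (t := k + t + 1) (by omega) (by omega)
  have h2 : chainSeq F b k (t + 1) (k + t + 1) = F (chainSeq F b k t) (k + t) := by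
    simp [chainSeq]
  rw [h1, h2]
  exact hF _ _ _ (fun i hi => chainSeq_agree F b k t i hi)

/-! ### The schedule: game `i` is played at times `tIdx i + k * dIdx i` -/

def iIdx (n : ℕ) : ℕ := (n + 1).factorization 2
def kIdx (n : ℕ) : ℕ := ((n + 1) / 2 ^ iIdx n) / 2
def tIdx (i : ℕ) : ℕ := 2 ^ i - 1
def dIdx (i : ℕ) : ℕ := 2 ^ (i + 1)

lemma two_le_dIdx (i : ℕ) : 2 ≤ dIdx i := by
  have : (2:ℕ) ^ 1 ≤ 2 ^ (i+1) := Nat.pow_le_pow_right (by norm_num) (by omega)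
  simpa [dIdx] using this

lemma one_le_dIdx (i : ℕ) : 1 ≤ dIdx i := le_trans (by norm_num) (two_le_dIdx i)

lemma decomp (n : ℕ) : n + 1 = 2 ^ iIdx n * (2 * kIdx n + 1) := by
  have hne : n + 1 ≠ 0 := Nat.succ_ne_zero n
  have h1 : 2 ^ iIdx n ∣ n + 1 := Nat.ordProj_dvd (n+1) 2
  have h2 : ¬ 2 ∣ (n + 1) / 2 ^ iIdx n := Nat.not_dvd_ordCompl Nat.prime_two hne
  have h3 : (n + 1) / 2 ^ iIdx n % 2 = 1 := by omega
  have h4 : 2 * kIdx n + 1 = (n + 1) / 2 ^ iIdx n := by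
    have := Nat.div_add_mod ((n + 1) / 2 ^ iIdx n) 2
    unfold kIdx; omega
  rw [h4, Nat.mul_div_cancel' h1]

lemma uniq (n i k : ℕ) (h : n + 1 = 2 ^ i * (2 * k + 1)) : iIdx n = i ∧ kIdx n = k := by
  have hi : iIdx n = i := by
    have hodd : ¬ (2 ∣ (2 * k + 1)) := by omega
    show (n+1).factorization 2 = i
    rw [h, Nat.factorization_mul (by positivity) (by omega)]
    simp [Nat.Prime.factorization_pow, Nat.factorization_eq_zero_of_not_dvd hodd,
      Nat.Prime.factorization Nat.prime_two]
  refine ⟨hi, ?_⟩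
  have hd := decomp n
  rw [hi] at hd
  have h2 : 2 ^ i * (2 * kIdx n + 1) = 2 ^ i * (2 * k + 1) := by omega
  have hp : 0 < 2 ^ i := Nat.pow_pos (by norm_num)
  have := Nat.eq_of_mul_eq_mul_left hp h2
  omega

lemma decomp' (n : ℕ) : n = tIdx (iIdx n) + kIdx n * dIdx (iIdx n) := by
  have h := decomp n
  have hp : 1 ≤ 2 ^ iIdx n := Nat.one_le_two_pow
  have h2 : (2:ℕ) ^ (iIdx n + 1) = 2 * 2 ^ iIdx n := by ring
  have h3 : 2 ^ iIdx n * (2 * kIdx n + 1) = 2 ^ iIdx n + kIdx n * (2 * 2 ^ iIdx n) := by ring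
  unfold tIdx dIdx
  rw [h2]
  omega

lemma uniq' (i k : ℕ) :
    iIdx (tIdx i + k * dIdx i) = i ∧ kIdx (tIdx i + k * dIdx i) = k := by
  apply uniq
  have hp : 1 ≤ 2 ^ i := Nat.one_le_two_pow
  have h2 : (2:ℕ) ^ (i + 1) = 2 * 2 ^ i := by ring
  have h3 : 2 ^ i * (2 * k + 1) = 2 ^ i + k * (2 * 2 ^ i) := by ring
  unfold tIdx dIdx
  rw [h2]
  omega

lemma step_lt (i j : ℕ) : tIdx i + j * dIdx i < tIdx i + (j+1) * dIdx i := by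
  have h : (j+1) * dIdx i = j * dIdx i + dIdx i := by ring
  have := one_le_dIdx i
  omega

/-! ### Monotonicity -/

variable [MetricSpace X]

lemma mono_beta {α α' β' : ℝ} {S : Set X} (hα' : 0 < α') (hβ' : 0 < β') (hle : α' ≤ α)
    (h : IsAlphaBetaWinning α (α' * β' / α) S) : IsAlphaBetaWinning α' β' S := by
  have hα : 0 < α := lt_of_lt_of_le hα' hle
  have key : α * (α' * β' / α) = α' * β' := by field_simp
  intro ρ hρ x₀
  obtain ⟨a, hcons, hwin⟩ := h ρ hρ x₀
  rw [key] at hwin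
  refine ⟨a, hcons, fun bob hb0 hleg => ?_⟩
  have hγ : (0:ℝ) ≤ α' * β' := by positivity
  have hleg' : ∀ n : ℕ, closedBall (bob (n + 1)) (ρ * (α' * β') ^ (n + 1)) ⊆
      closedBall (a bob n) (ρ * α * (α' * β') ^ n) := by
    intro n
    refine (hleg n).trans (closedBall_subset_closedBall ?_)
    have h2 := pow_nonneg hγ n
    nlinarith [mul_nonneg (mul_nonneg hρ.le (sub_nonneg.mpr hle)) h2]
  obtain ⟨hc, hz⟩ := hwin bob hb0 hleg'
  refine ⟨fun n => ?_, hz⟩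
  refine (closedBall_subset_closedBall ?_).trans (hc n)
  have h2 := pow_nonneg hγ n
  nlinarith [mul_nonneg (mul_nonneg hρ.le (sub_nonneg.mpr hle)) h2]

lemma mono {α α' : ℝ} {S : Set X} (h : IsAlphaWinning α S) (hα' : 0 < α') (hle : α' ≤ α) :
    IsAlphaWinning α' S := by
  obtain ⟨hα, hα1, hw⟩ := h
  refine ⟨hα', lt_of_le_of_lt hle hα1, fun β' hβ'0 hβ'1 => ?_⟩
  refine mono_beta hα' hβ'0 hle (hw (α' * β' / α) (by positivity) ?_)
  rw [div_lt_one hα]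
  calc α' * β' < α' * 1 := by nlinarith
    _ ≤ α := by linarith

/-! ### The combined strategy -/

/-- virtual Bob sequence for game `i` -/
def vb (bob : ℕ → X) (i : ℕ) (j : ℕ) : X := bob (tIdx i + j * dIdx i)

/-- combined strategy -/
def Astrat (Ai : ℕ → X → (ℕ → X) → ℕ → X) (bob : ℕ → X) (n : ℕ) : X :=
  Ai (iIdx n) (bob (tIdx (iIdx n))) (vb bob (iIdx n)) (kIdx n)

lemma Astrat_eq (Ai : ℕ → X → (ℕ → X) → ℕ → X) (bob : ℕ → X) (i j : ℕ) :
    Astrat Ai bob (tIdx i + j * dIdx i) = Ai i (bob (tIdx i)) (vb bob i) j := by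
  unfold Astrat
  rw [(uniq' i j).1, (uniq' i j).2]

lemma Astrat_cons (Ai : ℕ → X → (ℕ → X) → ℕ → X)
    (hAcons : ∀ i x, ∀ bb bb' : ℕ → X, ∀ m : ℕ, (∀ l ≤ m, bb l = bb' l) →
      Ai i x bb m = Ai i x bb' m)
    (bob bob' : ℕ → X) (n : ℕ) (hag : ∀ m ≤ n, bob m = bob' m) :
    Astrat Ai bob n = Astrat Ai bob' n := by
  have hdec := decomp' n
  have ht : tIdx (iIdx n) ≤ n := by omega
  unfold Astrat
  rw [hag _ ht]
  apply hAcons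
  intro l hl
  show bob (tIdx (iIdx n) + l * dIdx (iIdx n)) = bob' (tIdx (iIdx n) + l * dIdx (iIdx n))
  apply hag
  have := Nat.mul_le_mul_right (dIdx (iIdx n)) hl
  omega

lemma rad_eq {a : ℝ} (β ρ : ℝ) (ha : 0 < a) (i j : ℕ) :
    ρ * (a*β) ^ tIdx i * (a * ((a*β) ^ dIdx i / a)) ^ j
      = ρ * (a*β) ^ (tIdx i + j * dIdx i) := by
  have hkey : a * ((a*β) ^ dIdx i / a) = (a*β) ^ dIdx i := by field_simp
  rw [hkey, ← pow_mul, Nat.mul_comm (dIdx i) j, mul_assoc, ← pow_add]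

lemma radA_eq {a : ℝ} (β ρ : ℝ) (ha : 0 < a) (i j : ℕ) :
    ρ * (a*β) ^ tIdx i * a * (a * ((a*β) ^ dIdx i / a)) ^ j
      = ρ * a * (a*β) ^ (tIdx i + j * dIdx i) := by
  have h := rad_eq β ρ ha i j
  calc ρ * (a*β) ^ tIdx i * a * (a * ((a*β) ^ dIdx i / a)) ^ j
      = (ρ * (a*β) ^ tIdx i * (a * ((a*β) ^ dIdx i / a)) ^ j) * a := by ring
    _ = (ρ * (a*β) ^ (tIdx i + j * dIdx i)) * a := by rw [h]
    _ = ρ * a * (a*β) ^ (tIdx i + j * dIdx i) := by ring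

lemma core_main {S : ℕ → Set X} {a β ρ : ℝ} (ha : 0 < a) (ha1 : a < 1)
    (hβ0 : 0 < β) (hβ1 : β < 1) (hρ : 0 < ρ)
    {Ai : ℕ → X → (ℕ → X) → ℕ → X}
    (hAcons : ∀ i x, ∀ bb bb' : ℕ → X, ∀ m : ℕ, (∀ l ≤ m, bb l = bb' l) →
      Ai i x bb m = Ai i x bb' m)
    (hAwin : ∀ i x, ∀ bb : ℕ → X, bb 0 = x →
        (∀ j : ℕ, closedBall (bb (j + 1))
            (ρ * (a*β) ^ tIdx i * (a * ((a*β) ^ dIdx i / a)) ^ (j + 1)) ⊆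
          closedBall (Ai i x bb j)
            (ρ * (a*β) ^ tIdx i * a * (a * ((a*β) ^ dIdx i / a)) ^ j)) →
        (∀ j : ℕ, closedBall (Ai i x bb j)
            (ρ * (a*β) ^ tIdx i * a * (a * ((a*β) ^ dIdx i / a)) ^ j) ⊆
          closedBall (bb j) (ρ * (a*β) ^ tIdx i * (a * ((a*β) ^ dIdx i / a)) ^ j)) ∧
          ∀ z : X, (∀ j : ℕ, z ∈ closedBall (bb j)
            (ρ * (a*β) ^ tIdx i * (a * ((a*β) ^ dIdx i / a)) ^ j)) → z ∈ S i)
    (bob : ℕ → X)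
    (hleg : ∀ n : ℕ, closedBall (bob (n + 1)) (ρ * (a*β) ^ (n + 1)) ⊆
        closedBall (Astrat Ai bob n) (ρ * a * (a*β) ^ n)) :
    (∀ n : ℕ, closedBall (Astrat Ai bob n) (ρ * a * (a*β) ^ n) ⊆
        closedBall (bob n) (ρ * (a*β) ^ n)) ∧
      ∀ z : X, (∀ n : ℕ, z ∈ closedBall (bob n) (ρ * (a*β) ^ n)) → z ∈ ⋂ i, S i := by
  have hAwin' := hAwin
  simp only [rad_eq β ρ ha, radA_eq β ρ ha] at hAwin'
  -- nested chain of balls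
  have chain : ∀ M m : ℕ, m < M →
      (∀ m', m < m' → m' < M →
        closedBall (Astrat Ai bob m') (ρ * a * (a*β) ^ m') ⊆
          closedBall (bob m') (ρ * (a*β) ^ m')) →
      closedBall (bob M) (ρ * (a*β) ^ M) ⊆
        closedBall (Astrat Ai bob m) (ρ * a * (a*β) ^ m) := by
    intro M
    induction M with
    | zero => intro m hm _; exact absurd hm (Nat.not_lt_zero m)
    | succ M ih =>
      intro m hm hAC
      rcases Nat.lt_succ_iff_lt_or_eq.mp hm with hm' | rfl
      · exact (hleg M).trans ((hAC M hm' (Nat.lt_succ_self M)).trans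
          (ih m hm' (fun m' h1 h2 => hAC m' h1 (h2.trans (Nat.lt_succ_self M)))))
      · exact hleg m
  have main : ∀ n : ℕ, closedBall (Astrat Ai bob n) (ρ * a * (a*β) ^ n) ⊆
      closedBall (bob n) (ρ * (a*β) ^ n) := by
    intro n
    induction n using Nat.strong_induction_on with
    | _ n IH =>
      have hdec := decomp' n
      set i := iIdx n with hi
      set k := kIdx n with hk
      have hw_le : ∀ j, j ≤ k →
          extSeq (Ai i (bob (tIdx i))) (vb bob i) k j = vb bob i j :=
        fun j hj => extSeq_eq_of_le _ _ _ hj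
      have hw0 : extSeq (Ai i (bob (tIdx i))) (vb bob i) k 0 = bob (tIdx i) := by
        rw [hw_le 0 (Nat.zero_le k)]; simp [vb]
      have hwleg : ∀ j : ℕ,
          closedBall (extSeq (Ai i (bob (tIdx i))) (vb bob i) k (j+1))
            (ρ * (a*β) ^ (tIdx i + (j+1) * dIdx i)) ⊆
          closedBall (Ai i (bob (tIdx i)) (extSeq (Ai i (bob (tIdx i))) (vb bob i) k) j)
            (ρ * a * (a*β) ^ (tIdx i + j * dIdx i)) := by
        intro j
        rcases lt_or_ge j k with hj | hj
        · have e1 : extSeq (Ai i (bob (tIdx i))) (vb bob i) k (j+1)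
              = bob (tIdx i + (j+1) * dIdx i) := by
            rw [hw_le (j+1) hj]; rfl
          have e2 : Ai i (bob (tIdx i)) (extSeq (Ai i (bob (tIdx i))) (vb bob i) k) j
              = Astrat Ai bob (tIdx i + j * dIdx i) := by
            rw [hAcons i _ _ (vb bob i) j (fun l hl => hw_le l (le_trans hl hj.le))]
            exact (Astrat_eq Ai bob i j).symm
          rw [e1, e2]
          have hle_n : tIdx i + (j+1) * dIdx i ≤ n := by
            have hmul : (j+1) * dIdx i ≤ k * dIdx i := Nat.mul_le_mul_right (dIdx i) hj
            omega
          exact chain _ _ (step_lt i j) (fun m' _ h2 => IH m' (lt_of_lt_of_le h2 hle_n))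
        · have e1 : extSeq (Ai i (bob (tIdx i))) (vb bob i) k (j+1)
              = Ai i (bob (tIdx i)) (extSeq (Ai i (bob (tIdx i))) (vb bob i) k) j :=
            extSeq_succ _ (hAcons i _) _ _ hj
          rw [e1]
          apply closedBall_subset_closedBall
          have hγ0 : (0:ℝ) < a*β := by positivity
          have hγ1 : a*β < 1 := by nlinarith
          have h1 : (a*β) ^ (dIdx i) ≤ a := by
            calc (a*β) ^ dIdx i ≤ (a*β) ^ 1 :=
                  pow_le_pow_of_le_one hγ0.le hγ1.le (one_le_dIdx i)
              _ = a*β := pow_one _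
              _ ≤ a := by nlinarith
          have hexp : tIdx i + (j+1) * dIdx i = (tIdx i + j * dIdx i) + dIdx i := by ring
          rw [hexp, pow_add]
          have hp : (0:ℝ) ≤ (a*β) ^ (tIdx i + j * dIdx i) := by positivity
          calc ρ * ((a*β) ^ (tIdx i + j * dIdx i) * (a*β) ^ dIdx i)
              ≤ ρ * ((a*β) ^ (tIdx i + j * dIdx i) * a) := by
                apply mul_le_mul_of_nonneg_left (mul_le_mul_of_nonneg_left h1 hp) hρ.le
            _ = ρ * a * (a*β) ^ (tIdx i + j * dIdx i) := by ring
      obtain ⟨wc, -⟩ := hAwin' i (bob (tIdx i)) _ hw0 hwleg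
      have h3 := wc k
      have e3 : Ai i (bob (tIdx i)) (extSeq (Ai i (bob (tIdx i))) (vb bob i) k) k
          = Astrat Ai bob n := by
        rw [hAcons i _ _ (vb bob i) k (fun l hl => hw_le l hl)]
        rfl
      have e4 : extSeq (Ai i (bob (tIdx i))) (vb bob i) k k = bob n := by
        rw [hw_le k le_rfl]
        exact congrArg bob hdec.symm
      rw [e3, e4, ← hdec] at h3
      exact h3
  refine ⟨main, ?_⟩
  intro z hz
  refine Set.mem_iInter.mpr (fun i => ?_)
  have hvleg : ∀ j : ℕ,
      closedBall (vb bob i (j+1)) (ρ * (a*β) ^ (tIdx i + (j+1) * dIdx i)) ⊆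
      closedBall (Ai i (bob (tIdx i)) (vb bob i) j)
        (ρ * a * (a*β) ^ (tIdx i + j * dIdx i)) := by
    intro j
    have hch := chain (tIdx i + (j+1) * dIdx i) (tIdx i + j * dIdx i) (step_lt i j)
      (fun m' _ _ => main m')
    rw [Astrat_eq Ai bob i j] at hch
    exact hch
  obtain ⟨-, hmem⟩ := hAwin' i (bob (tIdx i)) (vb bob i) (by simp [vb]) hvleg
  exact hmem z (fun j => hz (tIdx i + j * dIdx i))

lemma core {S : ℕ → Set X} {a : ℝ} (ha : 0 < a) (ha1 : a < 1)
    (h : ∀ i, IsAlphaWinning a (S i)) : IsAlphaWinning a (⋂ i, S i) := by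
  refine ⟨ha, ha1, fun β hβ0 hβ1 => ?_⟩
  intro ρ hρ x₀
  have hγ1 : a * β < 1 := by nlinarith
  have hbet0 : ∀ i : ℕ, 0 < (a*β) ^ dIdx i / a := fun i => by positivity
  have hbet1 : ∀ i : ℕ, (a*β) ^ dIdx i / a < 1 := by
    intro i
    rw [div_lt_one ha]
    calc (a*β) ^ dIdx i ≤ (a*β) ^ 2 :=
          pow_le_pow_of_le_one (by positivity) hγ1.le (two_le_dIdx i)
      _ = a * (a * (β * β)) := by ring
      _ < a * 1 := by
          have : a * (β * β) < 1 := by nlinarith [mul_pos hβ0 hβ0]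
          exact mul_lt_mul_of_pos_left this ha
      _ = a := mul_one a
  have hρi : ∀ i : ℕ, 0 < ρ * (a*β) ^ tIdx i := fun i => by positivity
  have hstr := fun (i : ℕ) (x : X) =>
    (h i).2.2 ((a*β) ^ dIdx i / a) (hbet0 i) (hbet1 i) (ρ * (a*β) ^ tIdx i) (hρi i) x
  choose Ai hAcons hAwin using hstr
  refine ⟨Astrat Ai, fun bob bob' n hag => Astrat_cons Ai hAcons bob bob' n hag, ?_⟩
  intro bob hb0 hleg
  exact core_main ha ha1 hβ0 hβ1 hρ hAcons (fun i x bb h0 => hAwin i x bb h0) bob hleg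

end SchmidtAux

/-- A countable intersection of `αᵢ`-winning sets in a complete metric space,
with `infᵢ αᵢ = α₀ > 0`, is `α₀`-winning. -/
theorem isAlphaWinning_iInter
    {X : Type*} [MetricSpace X] [CompleteSpace X]
    (S : ℕ → Set X) (α : ℕ → ℝ) (h : ∀ i, IsAlphaWinning (α i) (S i))
    (h₀ : 0 < ⨅ i, α i) :
    IsAlphaWinning (⨅ i, α i) (⋂ i, S i) := by

  have hbdd : BddBelow (Set.range α) := ⟨0, fun x hx => by
    obtain ⟨i, rfl⟩ := hx; exact (h i).1.le⟩
  have hle : ∀ i, (⨅ i, α i) ≤ α i := fun i => ciInf_le hbdd i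
  have ha1 : (⨅ i, α i) < 1 := lt_of_le_of_lt (hle 0) (h 0).2.1
  exact SchmidtAux.core h₀ ha1 (fun i => SchmidtAux.mono (h i) h₀ (hle i))
end

section
/- Any winning set for Schmidt's game in R^d has Hausdorff dimension d. -/
open Metric

namespace SchmidtProof

open MeasureTheory Filter Set Topology
open scoped ENNReal NNReal

/-- Bob's centres, following Alice's strategy `a` and making at each step the move indexed by
`ω n` in a grid of `K^d` possible moves inside Alice's last ball. -/
noncomputable def bobC {d : ℕ} (a : (ℕ → (Fin d → ℝ)) → ℕ → (Fin d → ℝ)) (α β : ℝ) {K : ℕ}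
    (ω : ℕ → (Fin d → Fin K)) : ℕ → (Fin d → ℝ)
  | 0 => 0
  | n + 1 => a (fun k => bobC a α β ω (min k n)) n +
      fun i => (3 * β * ((ω n i : ℕ) : ℝ) - (1 - β)) * (α * (α * β) ^ n)
  termination_by n => n
  decreasing_by exact Nat.lt_succ_of_le (min_le_right _ _)

/-- All data of a fixed Schmidt game in `ℝ^d` with a winning strategy for Alice,
including the grid size `K` for Bob's counter-strategies. -/
structure Ctx (d : ℕ) where
  S : Set (Fin d → ℝ)
  α : ℝ
  β : ℝ
  K : ℕ
  a : (ℕ → (Fin d → ℝ)) → ℕ → (Fin d → ℝ)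
  hα0 : 0 < α
  hα1 : α < 1
  hβ0 : 0 < β
  hβ1 : β < 1
  hK1 : 1 ≤ K
  hKgrid : 3 * β * (K : ℝ) ≤ 2 + β
  hcons : ∀ bob bob' : ℕ → Fin d → ℝ, ∀ n : ℕ, (∀ i ≤ n, bob i = bob' i) → a bob n = a bob' n
  hwin : ∀ bob : ℕ → Fin d → ℝ, bob 0 = 0 →
    (∀ n : ℕ, closedBall (bob (n + 1)) (1 * (α * β) ^ (n + 1)) ⊆
        closedBall (a bob n) (1 * α * (α * β) ^ n)) →
    (∀ n : ℕ, closedBall (a bob n) (1 * α * (α * β) ^ n) ⊆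
        closedBall (bob n) (1 * (α * β) ^ n)) ∧
      ∀ z : Fin d → ℝ, (∀ n : ℕ, z ∈ closedBall (bob n) (1 * (α * β) ^ n)) → z ∈ S

namespace Ctx

variable {d : ℕ} (c : Ctx d)

noncomputable def bob (ω : ℕ → Fin d → Fin c.K) : ℕ → Fin d → ℝ := bobC c.a c.α c.β ω

/-- Bob's `n`-th ball. -/
noncomputable def cube (n : ℕ) (ω : ℕ → Fin d → Fin c.K) : Set (Fin d → ℝ) :=
  closedBall (c.bob ω n) ((c.α * c.β) ^ n)

lemma hαβ0 : 0 < c.α * c.β := mul_pos c.hα0 c.hβ0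

lemma hαβ1 : c.α * c.β < 1 := by
  nlinarith [c.hα0, c.hα1, c.hβ0, c.hβ1]

lemma hr0 (n : ℕ) : 0 < (c.α * c.β) ^ n := pow_pos c.hαβ0 n

lemma bob_zero (ω : ℕ → Fin d → Fin c.K) : c.bob ω 0 = 0 := by
  simp [bob, bobC]

lemma bob_succ (ω : ℕ → Fin d → Fin c.K) (n : ℕ) :
    c.bob ω (n + 1) = c.a (c.bob ω) n +
      fun i => (3 * c.β * ((ω n i : ℕ) : ℝ) - (1 - c.β)) * (c.α * (c.α * c.β) ^ n) := by
  unfold bob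
  rw [bobC]
  congr 1
  apply c.hcons
  intro i hi
  simp [min_eq_left hi]

lemma bob_congr (ω ω' : ℕ → Fin d → Fin c.K) (n : ℕ) (h : ∀ i < n, ω i = ω' i) :
    c.bob ω n = c.bob ω' n := by
  induction n using Nat.strong_induction_on with
  | _ n ih =>
    match n with
    | 0 => rw [c.bob_zero, c.bob_zero]
    | n + 1 =>
      show bobC c.a c.α c.β ω (n+1) = bobC c.a c.α c.β ω' (n+1)
      rw [bobC, bobC]
      congr 1
      · apply c.hcons
        intro i _
        exact ih (min i n) (Nat.lt_succ_of_le (min_le_right _ _))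
          (fun j hj => h j (lt_of_lt_of_le hj (le_trans (min_le_right _ _) (Nat.le_succ _))))
      · rw [h n (Nat.lt_succ_self n)]

lemma legal (ω : ℕ → Fin d → Fin c.K) (n : ℕ) :
    closedBall (c.bob ω (n + 1)) (1 * (c.α * c.β) ^ (n + 1)) ⊆
      closedBall (c.a (c.bob ω) n) (1 * c.α * (c.α * c.β) ^ n) := by
  have hR : 0 ≤ c.α * (c.α * c.β) ^ n := le_of_lt (mul_pos c.hα0 (c.hr0 n))
  apply closedBall_subset_closedBall'
  have hdist : dist (c.bob ω (n + 1)) (c.a (c.bob ω) n) ≤ (1 - c.β) * (c.α * (c.α * c.β) ^ n) := by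
    rw [c.bob_succ ω n]
    rw [dist_pi_le_iff (by nlinarith [c.hβ1])]
    intro b
    have hlt : ((ω n b : ℕ) : ℝ) ≤ (c.K : ℝ) - 1 := by
      have := (ω n b).2
      have : ((ω n b : ℕ) : ℝ) + 1 ≤ (c.K : ℝ) := by exact_mod_cast this
      linarith
    have hge : (0:ℝ) ≤ ((ω n b : ℕ) : ℝ) := Nat.cast_nonneg _
    have hb0 := c.hβ0
    have hb1 := c.hβ1
    have hgrid := c.hKgrid
    simp only [Pi.add_apply, Real.dist_eq, add_sub_cancel_left]
    rw [abs_mul, abs_of_nonneg hR]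
    apply mul_le_mul_of_nonneg_right _ hR
    rw [abs_le]
    constructor <;> nlinarith
  have : 1 * (c.α * c.β) ^ (n + 1) + (1 - c.β) * (c.α * (c.α * c.β) ^ n)
      = 1 * c.α * (c.α * c.β) ^ n := by ring
  linarith [hdist]

lemma cube_succ_subset (ω : ℕ → Fin d → Fin c.K) (n : ℕ) :
    c.cube (n + 1) ω ⊆ c.cube n ω := by
  intro x hx
  have h1 : x ∈ closedBall (c.bob ω (n+1)) (1 * (c.α * c.β) ^ (n + 1)) := by rwa [one_mul]
  have h2 := (c.hwin (c.bob ω) (c.bob_zero ω) (c.legal ω)).1 n (c.legal ω n h1)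
  simpa [cube, one_mul] using h2

lemma cube_mono (ω : ℕ → Fin d → Fin c.K) {m n : ℕ} (h : m ≤ n) :
    c.cube n ω ⊆ c.cube m ω := by
  induction n, h using Nat.le_induction with
  | base => exact subset_rfl
  | succ n hmn ih => exact subset_trans (c.cube_succ_subset ω n) ih

lemma bob_mem_cube (ω : ℕ → Fin d → Fin c.K) {m n : ℕ} (h : n ≤ m) :
    c.bob ω m ∈ c.cube n ω := by
  exact c.cube_mono ω h (mem_closedBall_self (le_of_lt (c.hr0 m)))

lemma bob_cauchy (ω : ℕ → Fin d → Fin c.K) : CauchySeq (c.bob ω) := by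
  apply cauchySeq_of_le_geometric (c.α * c.β) 1 c.hαβ1
  intro n
  have := c.bob_mem_cube ω (Nat.le_succ n)
  rw [cube, mem_closedBall] at this
  rw [dist_comm, one_mul]
  exact this

/-- The limit point of Bob's centres. -/
noncomputable def pt (ω : ℕ → Fin d → Fin c.K) : Fin d → ℝ := limUnder atTop (c.bob ω)

lemma tendsto_pt (ω : ℕ → Fin d → Fin c.K) : Tendsto (c.bob ω) atTop (𝓝 (c.pt ω)) :=
  (c.bob_cauchy ω).tendsto_limUnder

lemma pt_mem_cube (ω : ℕ → Fin d → Fin c.K) (n : ℕ) : c.pt ω ∈ c.cube n ω := by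
  apply IsClosed.mem_of_tendsto Metric.isClosed_closedBall (c.tendsto_pt ω)
  filter_upwards [eventually_ge_atTop n] with m hm using c.bob_mem_cube ω hm

lemma pt_mem_S (ω : ℕ → Fin d → Fin c.K) : c.pt ω ∈ c.S := by
  exact (c.hwin (c.bob ω) (c.bob_zero ω) (c.legal ω)).2 (c.pt ω)
    (fun n => by simpa [cube, one_mul] using c.pt_mem_cube ω n)

/-- Separation of the cubes corresponding to different branches. -/
lemma cube_sep (ω ω' : ℕ → Fin d → Fin c.K) (n : ℕ) (hne : ∃ i < n, ω i ≠ ω' i)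
    {x y : Fin d → ℝ} (hx : x ∈ c.cube n ω) (hy : y ∈ c.cube n ω') :
    (c.α * c.β) ^ n ≤ dist x y := by
  classical
  have hex : ∃ m, ω m ≠ ω' m := by obtain ⟨i, _, h⟩ := hne; exact ⟨i, h⟩
  set m := Nat.find hex with hmdef
  have hm : ω m ≠ ω' m := Nat.find_spec hex
  have hmlt : m + 1 ≤ n := by
    obtain ⟨i, hi, h⟩ := hne
    exact Nat.succ_le_of_lt (lt_of_le_of_lt (Nat.find_min' hex h) hi)
  have hagree : ∀ j < m, ω j = ω' j := fun j hj => not_not.mp (Nat.find_min hex hj)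
  -- the Alice centres agree
  have hA : c.a (c.bob ω) m = c.a (c.bob ω') m := by
    apply c.hcons
    intro i hi
    exact c.bob_congr ω ω' i (fun j hj => hagree j (lt_of_lt_of_le hj hi))
  obtain ⟨b, hb⟩ := Function.ne_iff.mp hm
  -- centre separation at level m+1
  have hcent : 3 * ((c.α * c.β) ^ (m+1)) ≤ dist (c.bob ω (m+1)) (c.bob ω' (m+1)) := by
    refine le_trans ?_ (dist_le_pi_dist (c.bob ω (m+1)) (c.bob ω' (m+1)) b)
    have e1 : c.bob ω (m+1) b
        = c.a (c.bob ω) m b + (3 * c.β * ((ω m b : ℕ) : ℝ) - (1 - c.β)) * (c.α * (c.α * c.β) ^ m) := by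
      rw [c.bob_succ ω m]; simp
    have e2 : c.bob ω' (m+1) b
        = c.a (c.bob ω) m b + (3 * c.β * ((ω' m b : ℕ) : ℝ) - (1 - c.β)) * (c.α * (c.α * c.β) ^ m) := by
      rw [c.bob_succ ω' m, hA]; simp
    have hcast : (1:ℝ) ≤ |((ω m b : ℕ) : ℝ) - ((ω' m b : ℕ) : ℝ)| := by
      have hne2 : ((ω m b : ℕ) : ℤ) ≠ ((ω' m b : ℕ) : ℤ) := by
        intro hc
        exact hb (Fin.ext (by exact_mod_cast hc))
      have h1 : (1:ℤ) ≤ |((ω m b : ℕ) : ℤ) - ((ω' m b : ℕ) : ℤ)| :=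
        Int.one_le_abs (sub_ne_zero.mpr hne2)
      calc (1:ℝ) = ((1:ℤ):ℝ) := by norm_num
        _ ≤ ((|((ω m b : ℕ) : ℤ) - ((ω' m b : ℕ) : ℤ)| : ℤ) : ℝ) := by exact_mod_cast h1
        _ = |((ω m b : ℕ) : ℝ) - ((ω' m b : ℕ) : ℝ)| := by push_cast; ring_nf
    have hR : (0:ℝ) ≤ c.α * (c.α * c.β) ^ m := le_of_lt (mul_pos c.hα0 (c.hr0 m))
    have hβ : (0:ℝ) < c.β := c.hβ0
    rw [e1, e2, Real.dist_eq]
    have key : c.a (c.bob ω) m b + (3 * c.β * ((ω m b : ℕ) : ℝ) - (1 - c.β)) * (c.α * (c.α * c.β) ^ m)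
        - (c.a (c.bob ω) m b + (3 * c.β * ((ω' m b : ℕ) : ℝ) - (1 - c.β)) * (c.α * (c.α * c.β) ^ m))
        = 3 * c.β * (((ω m b : ℕ) : ℝ) - ((ω' m b : ℕ) : ℝ)) * (c.α * (c.α * c.β) ^ m) := by ring
    rw [key, abs_mul, abs_mul, abs_of_nonneg hR, abs_of_pos (by linarith : (0:ℝ) < 3 * c.β)]
    have heq : (c.α * c.β) ^ (m + 1) = c.β * (c.α * (c.α * c.β) ^ m) := by ring
    rw [heq]
    have hmul := mul_le_mul_of_nonneg_right
      (mul_le_mul_of_nonneg_left hcast (by linarith : (0:ℝ) ≤ 3 * c.β)) hR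
    nlinarith [hmul]
  have hx1 : dist x (c.bob ω (m+1)) ≤ (c.α * c.β) ^ (m+1) := c.cube_mono ω hmlt hx
  have hy1 : dist y (c.bob ω' (m+1)) ≤ (c.α * c.β) ^ (m+1) := c.cube_mono ω' hmlt hy
  have htri : dist (c.bob ω (m+1)) (c.bob ω' (m+1))
      ≤ dist x (c.bob ω (m+1)) + dist x y + dist y (c.bob ω' (m+1)) := by
    calc dist (c.bob ω (m+1)) (c.bob ω' (m+1))
        ≤ dist (c.bob ω (m+1)) x + dist x (c.bob ω' (m+1)) := dist_triangle _ _ _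
      _ ≤ dist (c.bob ω (m+1)) x + (dist x y + dist y (c.bob ω' (m+1))) := by
          exact add_le_add_right (dist_triangle x y (c.bob ω' (m+1))) _
      _ = dist x (c.bob ω (m+1)) + dist x y + dist y (c.bob ω' (m+1)) := by
          rw [dist_comm (c.bob ω (m+1)) x]; ring
  have hpow : (c.α * c.β) ^ n ≤ (c.α * c.β) ^ (m+1) :=
    pow_le_pow_of_le_one (le_of_lt c.hαβ0) (le_of_lt c.hαβ1) hmlt
  linarith


section DigitsMeasure

/-- Value of the word `v` read in base `N`. -/
def mwd (N : ℕ) (v : ℕ → ℕ) : ℕ → ℕ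
  | 0 => 0
  | n + 1 => N * mwd N v n + v n

variable {d : ℕ} (c : Ctx d)

/-- The number of possible moves of Bob at each step. -/
noncomputable def Nn : ℕ := Fintype.card (Fin d → Fin c.K)

lemma hN1 : 0 < c.Nn :=
  Fintype.card_pos_iff.mpr ⟨fun _ => ⟨0, c.hK1⟩⟩

/-- The `n`-th digit of `x` in base `N`, as an integer. -/
noncomputable def digZ (x : ℝ) (n : ℕ) : ℤ :=
  ⌊x * (c.Nn : ℝ) ^ (n + 1)⌋ - (c.Nn : ℤ) * ⌊x * (c.Nn : ℝ) ^ n⌋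

lemma digZ_nonneg (x : ℝ) (n : ℕ) : 0 ≤ c.digZ x n := by
  have hfl := Int.floor_le (x * (c.Nn : ℝ) ^ n)
  have hN : (0:ℝ) ≤ (c.Nn : ℝ) := Nat.cast_nonneg _
  have : ((c.Nn : ℤ) * ⌊x * (c.Nn : ℝ) ^ n⌋ : ℤ) ≤ ⌊x * (c.Nn : ℝ) ^ (n+1)⌋ := by
    apply Int.le_floor.mpr
    push_cast
    have hy : x * (c.Nn:ℝ)^(n+1) = (c.Nn:ℝ) * (x * (c.Nn:ℝ)^n) := by ring
    rw [hy]
    exact mul_le_mul_of_nonneg_left hfl hN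
  unfold digZ
  omega

lemma digZ_lt (x : ℝ) (n : ℕ) : c.digZ x n < (c.Nn : ℤ) := by
  have hfl := Int.lt_floor_add_one (x * (c.Nn : ℝ) ^ n)
  have hN : (0:ℝ) < (c.Nn : ℝ) := by exact_mod_cast c.hN1
  have : ⌊x * (c.Nn : ℝ) ^ (n+1)⌋ < (c.Nn : ℤ) * ⌊x * (c.Nn : ℝ) ^ n⌋ + (c.Nn : ℤ) := by
    apply Int.floor_lt.mpr
    push_cast
    have hy : x * (c.Nn:ℝ)^(n+1) = (c.Nn:ℝ) * (x * (c.Nn:ℝ)^n) := by ring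
    have heq : (c.Nn:ℝ) * ↑⌊x * (c.Nn:ℝ)^n⌋ + (c.Nn:ℝ) = (c.Nn:ℝ) * (↑⌊x * (c.Nn:ℝ)^n⌋ + 1) := by
      ring
    rw [hy, heq]
    exact mul_lt_mul_of_pos_left hfl hN
  unfold digZ
  omega

/-- The `n`-th digit of `x` in base `N`, as an element of `Fin N`. -/
noncomputable def digF (x : ℝ) (n : ℕ) : Fin c.Nn :=
  ⟨(c.digZ x n).toNat % c.Nn, Nat.mod_lt _ c.hN1⟩

lemma digF_val (x : ℝ) (n : ℕ) : ((c.digF x n : ℕ) : ℤ) = c.digZ x n := by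
  have h0 := c.digZ_nonneg x n
  have hlt : (c.digZ x n).toNat < c.Nn := by
    have := c.digZ_lt x n
    omega
  show (((c.digZ x n).toNat % c.Nn : ℕ) : ℤ) = c.digZ x n
  rw [Nat.mod_eq_of_lt hlt]
  exact Int.toNat_of_nonneg h0

/-- The branch of the tree of Bob's moves determined by the digits of `x`. -/
noncomputable def dω (x : ℝ) : ℕ → Fin d → Fin c.K := fun n =>
  (Fintype.equivFin (Fin d → Fin c.K)).symm (c.digF x n)

/-- The map sending `x ∈ [0,1)` to the outcome of the game along the branch
determined by the digits of `x`. -/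
noncomputable def φ (x : ℝ) : Fin d → ℝ := c.pt (c.dω x)

lemma meas_digZ (n : ℕ) : Measurable (fun x => c.digZ x n) := by
  have h1 : Measurable fun x : ℝ => ⌊x * (c.Nn : ℝ) ^ (n+1)⌋ :=
    Int.measurable_floor.comp (measurable_id.mul_const _)
  have h2 : Measurable fun x : ℝ => ⌊x * (c.Nn : ℝ) ^ n⌋ :=
    Int.measurable_floor.comp (measurable_id.mul_const _)
  exact h1.sub (h2.const_mul _)

lemma meas_bob_pre (n : ℕ) : Measurable (fun x => c.bob (c.dω x) n) := by
  classical
  let T : ℝ → (Fin n → ℤ) := fun x i => c.digZ x i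
  have hT : Measurable T := measurable_pi_lambda _ (fun i => c.meas_digZ i)
  let dec : ℤ → Fin d → Fin c.K := fun z =>
    (Fintype.equivFin (Fin d → Fin c.K)).symm ⟨z.toNat % c.Nn, Nat.mod_lt _ c.hN1⟩
  let G : (Fin n → ℤ) → Fin d → ℝ := fun t =>
    c.bob (fun i => if h : i < n then dec (t ⟨i, h⟩) else fun _ => ⟨0, c.hK1⟩) n
  have hfac : (fun x => c.bob (c.dω x) n) = G ∘ T := by
    funext x
    refine c.bob_congr _ _ n (fun i hi => ?_)
    simp only [G, T, dec, Function.comp, dif_pos hi]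
    rfl
  rw [hfac]
  exact (measurable_of_countable G).comp hT

lemma meas_φ : Measurable c.φ := by
  apply measurable_of_tendsto_metrizable (fun n => c.meas_bob_pre n)
  rw [tendsto_pi_nhds]
  intro x
  exact c.tendsto_pt (c.dω x)

/-- Extension of a finite word to an infinite one. -/
def extW {n : ℕ} (w : Fin n → Fin d → Fin c.K) : ℕ → Fin d → Fin c.K := fun i =>
  if h : i < n then w ⟨i, h⟩ else fun _ => ⟨0, c.hK1⟩

lemma floor_mwd (x : ℝ) (hx : x ∈ Set.Ico (0:ℝ) 1) (v : ℕ → ℕ) (n : ℕ)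
    (hv : ∀ i < n, (c.digF x i : ℕ) = v i) :
    ⌊x * (c.Nn : ℝ) ^ n⌋ = (mwd c.Nn v n : ℤ) := by
  induction n with
  | zero => simpa [mwd] using Int.floor_eq_zero_iff.mpr (by simpa using hx)
  | succ n ih =>
    have hd : c.digZ x n = ((v n : ℕ) : ℤ) := by
      rw [← c.digF_val x n, hv n (Nat.lt_succ_self n)]
    have ihh := ih (fun i hi => hv i (lt_trans hi (Nat.lt_succ_self n)))
    have hstep : mwd c.Nn v (n + 1) = c.Nn * mwd c.Nn v n + v n := rfl
    unfold digZ at hd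
    rw [ihh] at hd
    rw [hstep]
    push_cast
    push_cast at hd
    linarith

lemma cyl_vol (n : ℕ) (v : ℕ → ℕ) :
    MeasureTheory.volume {x | x ∈ Set.Ico (0:ℝ) 1 ∧ ∀ i < n, (c.digF x i : ℕ) = v i}
      ≤ (((c.Nn : ℝ≥0∞)) ^ n)⁻¹ := by
  have hpos : (0:ℝ) < (c.Nn : ℝ) ^ n := by
    have : (0:ℝ) < (c.Nn : ℝ) := by exact_mod_cast c.hN1
    positivity
  set m := mwd c.Nn v n with hm
  have hsub : {x | x ∈ Set.Ico (0:ℝ) 1 ∧ ∀ i < n, (c.digF x i : ℕ) = v i}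
      ⊆ Set.Ico ((m:ℝ)/(c.Nn : ℝ)^n) (((m:ℝ)+1)/(c.Nn : ℝ)^n) := by
    rintro x ⟨hx, hdig⟩
    have hf := c.floor_mwd x hx v n hdig
    have h1 : (m:ℝ) ≤ x * (c.Nn : ℝ)^n := by
      have := Int.floor_le (x * (c.Nn : ℝ)^n)
      rw [hf] at this
      exact_mod_cast this
    have h2 : x * (c.Nn : ℝ)^n < (m:ℝ) + 1 := by
      have := Int.lt_floor_add_one (x * (c.Nn : ℝ)^n)
      rw [hf] at this
      exact_mod_cast this
    constructor
    · rw [div_le_iff₀ hpos]; linarith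
    · rw [lt_div_iff₀ hpos]; linarith
  apply le_trans (measure_mono hsub)
  rw [Real.volume_Ico]
  have heq : ((m:ℝ)+1)/(c.Nn : ℝ)^n - (m:ℝ)/(c.Nn : ℝ)^n = ((c.Nn : ℝ)^n)⁻¹ := by
    field_simp
    ring
  rw [heq, ENNReal.ofReal_inv_of_pos hpos]
  apply le_of_eq
  congr 1
  rw [ENNReal.ofReal_pow (Nat.cast_nonneg _), ENNReal.ofReal_natCast]

/-- The mass distribution on the outcome set. -/
noncomputable def ν : MeasureTheory.Measure (Fin d → ℝ) :=
  (MeasureTheory.volume.restrict (Set.Ico (0:ℝ) 1)).map c.φ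

lemma cube_measurable (n : ℕ) (ω : ℕ → Fin d → Fin c.K) : MeasurableSet (c.cube n ω) :=
  measurableSet_closedBall

lemma digit_determined {n : ℕ} (w : Fin n → Fin d → Fin c.K) (x : ℝ)
    (hx : c.φ x ∈ c.cube n (c.extW w)) : ∀ i < n, c.dω x i = c.extW w i := by
  intro i hi
  by_contra hne
  have hx' : c.pt (c.dω x) ∈ c.cube n (c.extW w) := hx
  have hsep := c.cube_sep (c.dω x) (c.extW w) n ⟨i, hi, hne⟩ (c.pt_mem_cube (c.dω x) n) hx'
  rw [dist_self] at hsep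
  linarith [c.hr0 n]

lemma nu_cube_le (n : ℕ) (w : Fin n → Fin d → Fin c.K) :
    c.ν (c.cube n (c.extW w)) ≤ ((c.Nn : ℝ≥0∞) ^ n)⁻¹ := by
  have hv : c.φ ⁻¹' (c.cube n (c.extW w)) ∩ Set.Ico (0:ℝ) 1
      ⊆ {x | x ∈ Set.Ico (0:ℝ) 1 ∧ ∀ i < n,
          (c.digF x i : ℕ) = (((Fintype.equivFin (Fin d → Fin c.K)) (c.extW w i) : Fin c.Nn) : ℕ)} := by
    rintro x ⟨hx1, hx2⟩
    refine ⟨hx2, fun i hi => ?_⟩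
    have hdet := c.digit_determined w x hx1 i hi
    have : c.digF x i = (Fintype.equivFin (Fin d → Fin c.K)) (c.extW w i) := by
      rw [← hdet]; simp [dω]; exact (Equiv.apply_symm_apply _ _).symm
    rw [this]
  rw [ν, Measure.map_apply c.meas_φ (c.cube_measurable n _),
    Measure.restrict_apply (c.meas_φ (c.cube_measurable n _))]
  exact le_trans (measure_mono hv) (c.cyl_vol n _)

lemma nu_compl (n : ℕ) :
    c.ν (⋃ w : Fin n → Fin d → Fin c.K, c.cube n (c.extW w))ᶜ = 0 := by
  have hmeas : MeasurableSet (⋃ w : Fin n → Fin d → Fin c.K, c.cube n (c.extW w))ᶜ :=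
    (MeasurableSet.iUnion (fun w => c.cube_measurable n _)).compl
  rw [ν, Measure.map_apply c.meas_φ hmeas, Measure.restrict_apply (c.meas_φ hmeas)]
  have hpre : c.φ ⁻¹' (⋃ w : Fin n → Fin d → Fin c.K, c.cube n (c.extW w))ᶜ = ∅ := by
    rw [Set.eq_empty_iff_forall_notMem]
    intro x hx
    apply hx
    rw [Set.mem_iUnion]
    refine ⟨fun i => c.dω x i, ?_⟩
    have hagree : ∀ i < n, c.extW (fun j : Fin n => c.dω x j) i = c.dω x i := by
      intro i hi
      simp [extW, dif_pos hi]
    have : c.cube n (c.extW (fun i : Fin n => c.dω x i)) = c.cube n (c.dω x) := by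
      unfold cube
      rw [c.bob_congr _ _ n hagree]
    rw [this]
    exact c.pt_mem_cube (c.dω x) n
  rw [hpre]
  simp

lemma nu_S : 1 ≤ c.ν c.S := by
  have hpre : c.φ ⁻¹' c.S = Set.univ := Set.eq_univ_of_forall (fun x => c.pt_mem_S (c.dω x))
  have h2 := Measure.le_map_apply (c.meas_φ.aemeasurable
    (μ := MeasureTheory.volume.restrict (Set.Ico (0:ℝ) 1))) c.S
  rw [hpre] at h2
  simpa [ν, Measure.restrict_apply_univ, Real.volume_Ico] using h2

end DigitsMeasure

end Ctx

/-- Packing bound: points in a `δ`-ball which are pairwise `δ`-separated number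
at most `3^d` in the sup metric. -/
lemma pack {d : ℕ} {γ : Type*} (W : Finset γ) (p : γ → Fin d → ℝ) (δ : ℝ) (hδ : 0 < δ)
    (x0 : Fin d → ℝ) (hnear : ∀ g ∈ W, dist (p g) x0 ≤ δ)
    (hsep : ∀ g ∈ W, ∀ g' ∈ W, g ≠ g' → δ ≤ dist (p g) (p g')) : W.card ≤ 3 ^ d := by
  classical
  set t : Finset (Fin d → ℤ) :=
    Fintype.piFinset (fun i : Fin d => Finset.Icc (⌊x0 i / δ⌋ - 1) (⌊x0 i / δ⌋ + 1)) with ht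
  have hcard : t.card = 3 ^ d := by
    rw [ht, Fintype.card_piFinset]
    have : ∀ i : Fin d, (Finset.Icc (⌊x0 i / δ⌋ - 1) (⌊x0 i / δ⌋ + 1)).card = 3 := by
      intro i
      rw [Int.card_Icc]
      omega
    simp [this]
  have hmaps : ∀ g ∈ W, (fun i => ⌊p g i / δ⌋) ∈ t := by
    intro g hg
    rw [ht, Fintype.mem_piFinset]
    intro i
    have hco : |p g i - x0 i| ≤ δ := by
      have h1 := dist_le_pi_dist (p g) x0 i
      rw [Real.dist_eq] at h1
      exact le_trans h1 (hnear g hg)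
    rw [Finset.mem_Icc]
    have hl : x0 i / δ - 1 ≤ p g i / δ := by
      rw [abs_le] at hco
      rw [div_sub' (ne_of_gt hδ), div_le_div_iff₀ hδ hδ]
      nlinarith [hco.1]
    have hr : p g i / δ ≤ x0 i / δ + 1 := by
      rw [abs_le] at hco
      rw [div_add' _ _ _ (ne_of_gt hδ), div_le_div_iff₀ hδ hδ]
      nlinarith [hco.2]
    constructor
    · calc ⌊x0 i / δ⌋ - 1 = ⌊x0 i / δ - (1:ℤ)⌋ := (Int.floor_sub_intCast _ _).symm
        _ ≤ ⌊p g i / δ⌋ := Int.floor_le_floor (by push_cast; linarith)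
    · calc ⌊p g i / δ⌋ ≤ ⌊x0 i / δ + (1:ℤ)⌋ := Int.floor_le_floor (by push_cast; linarith)
        _ = ⌊x0 i / δ⌋ + 1 := Int.floor_add_intCast _ _
  have hinj : Set.InjOn (fun g => fun i => ⌊p g i / δ⌋) W := by
    intro g hg g' hg' heq
    by_contra hne
    have hdist := hsep g hg g' hg' hne
    have hall : ∀ i, dist (p g i) (p g' i) < δ := by
      intro i
      have hfl : ⌊p g i / δ⌋ = ⌊p g' i / δ⌋ := congrFun heq i
      have := Int.abs_sub_lt_one_of_floor_eq_floor hfl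
      rw [Real.dist_eq]
      have hne0 : δ ≠ 0 := ne_of_gt hδ
      have : |(p g i - p g' i) / δ| < 1 := by
        rw [show (p g i - p g' i) / δ = p g i / δ - p g' i / δ by ring] at *
        exact this
      rw [abs_div, abs_of_pos hδ, div_lt_one hδ] at this
      exact this
    have := (dist_pi_lt_iff hδ).mpr hall
    linarith
  calc W.card ≤ t.card := Finset.card_le_card_of_injOn _ hmaps hinj
    _ = 3 ^ d := hcard

namespace Ctx

variable {d : ℕ} (c : Ctx d)

lemma nu_le (n : ℕ) (E : Set (Fin d → ℝ))
    (hE : ∀ x ∈ E, ∀ y ∈ E, dist x y ≤ (c.α * c.β) ^ n) :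
    c.ν E ≤ (3 : ℝ≥0∞) ^ d * ((c.Nn : ℝ≥0∞) ^ n)⁻¹ := by
  classical
  rcases E.eq_empty_or_nonempty with rfl | ⟨x0, hx0⟩
  · simp
  set W : Finset (Fin n → Fin d → Fin c.K) :=
    Finset.univ.filter (fun w => (E ∩ c.cube n (c.extW w)).Nonempty) with hW
  -- choose a point in each cube meeting E
  have hptW : ∀ w ∈ W, ∃ z, z ∈ E ∩ c.cube n (c.extW w) := by
    intro w hw
    rw [hW, Finset.mem_filter] at hw
    exact hw.2
  choose! ptW hptW' using hptW
  -- counting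
  have hcount : W.card ≤ 3 ^ d := by
    apply pack W ptW ((c.α * c.β) ^ n) (c.hr0 n) x0
    · intro g hg
      exact hE _ ((hptW' g hg).1) _ hx0
    · intro g hg g' hg' hne
      obtain ⟨i, hi⟩ := Function.ne_iff.mp hne
      have hidx : ∃ j < n, c.extW g j ≠ c.extW g' j := by
        refine ⟨i.val, i.isLt, ?_⟩
        simpa [extW, dif_pos i.isLt] using hi
      exact c.cube_sep _ _ n hidx ((hptW' g hg).2) ((hptW' g' hg').2)
  -- cover E
  have hcover : E ⊆ (⋃ w ∈ W, c.cube n (c.extW w)) ∪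
      (⋃ w : Fin n → Fin d → Fin c.K, c.cube n (c.extW w))ᶜ := by
    intro x hx
    by_cases hmem : x ∈ ⋃ w : Fin n → Fin d → Fin c.K, c.cube n (c.extW w)
    · obtain ⟨w, hw⟩ := Set.mem_iUnion.mp hmem
      left
      have hwW : w ∈ W := by
        rw [hW, Finset.mem_filter]
        exact ⟨Finset.mem_univ _, ⟨x, hx, hw⟩⟩
      simp only [Set.mem_iUnion]
      exact ⟨w, hwW, hw⟩
    · right; exact hmem
  calc c.ν E ≤ c.ν ((⋃ w ∈ W, c.cube n (c.extW w)) ∪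
        (⋃ w : Fin n → Fin d → Fin c.K, c.cube n (c.extW w))ᶜ) := measure_mono hcover
    _ ≤ c.ν (⋃ w ∈ W, c.cube n (c.extW w)) +
        c.ν (⋃ w : Fin n → Fin d → Fin c.K, c.cube n (c.extW w))ᶜ := measure_union_le _ _
    _ = c.ν (⋃ w ∈ W, c.cube n (c.extW w)) := by rw [c.nu_compl n, add_zero]
    _ ≤ ∑ w ∈ W, c.ν (c.cube n (c.extW w)) := measure_biUnion_finset_le _ _
    _ ≤ ∑ _w ∈ W, ((c.Nn : ℝ≥0∞) ^ n)⁻¹ := Finset.sum_le_sum (fun w _ => c.nu_cube_le n w)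
    _ = (W.card : ℝ≥0∞) * ((c.Nn : ℝ≥0∞) ^ n)⁻¹ := by
        rw [Finset.sum_const, nsmul_eq_mul]
    _ ≤ (3 : ℝ≥0∞) ^ d * ((c.Nn : ℝ≥0∞) ^ n)⁻¹ := by
        apply mul_le_mul_left
        calc (W.card : ℝ≥0∞) ≤ ((3 ^ d : ℕ) : ℝ≥0∞) := Nat.cast_le.mpr hcount
          _ = (3 : ℝ≥0∞) ^ d := by push_cast; ring

open MeasureTheory in
lemma hmeas_lower (hN2 : 2 ≤ c.Nn) (s : ℝ) (hs0 : 0 < s)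
    (hNs : ((c.Nn : ℝ))⁻¹ ≤ (c.α * c.β) ^ s) :
    ENNReal.ofReal ((c.α * c.β) ^ s / 3 ^ d) ≤ μH[s] c.S := by
  set coef : ℝ≥0∞ := ENNReal.ofReal ((c.α * c.β) ^ s / 3 ^ d) with hcoef
  have hNpos : (0:ℝ) < (c.Nn : ℝ) := by exact_mod_cast c.hN1
  have hmain : ∀ E : Set (Fin d → ℝ), EMetric.diam E ≤ ENNReal.ofReal (c.α * c.β) →
      (coef • c.ν) E ≤ EMetric.diam E ^ s := by
    intro E hdiam
    have htop : EMetric.diam E ≠ ⊤ := ne_top_of_le_ne_top ENNReal.ofReal_ne_top hdiam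
    set t : ℝ := (EMetric.diam E).toReal with htdef
    have hden : ∀ x ∈ E, ∀ y ∈ E, dist x y ≤ t := by
      intro x hx y hy
      have h1 := EMetric.edist_le_diam_of_mem hx hy
      have h2 := ENNReal.toReal_mono htop h1
      rwa [← dist_edist] at h2
    by_cases ht0 : t ≤ 0
    · -- diameter zero: the measure vanishes
      have hzero : c.ν E = 0 := by
        have hb : ∀ n : ℕ, c.ν E ≤ (3:ℝ≥0∞)^d * ((c.Nn:ℝ≥0∞)^n)⁻¹ := by
          intro n
          apply c.nu_le n E
          intro x hx y hy
          have hxy : dist x y = 0 :=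
            le_antisymm (le_trans (hden x hx y hy) ht0) dist_nonneg
          rw [hxy]
          exact le_of_lt (c.hr0 n)
        have h2 : ((c.Nn:ℝ≥0∞))⁻¹ < 1 := by
          rw [ENNReal.inv_lt_one]
          exact_mod_cast (by omega : (1:ℕ) < c.Nn)
        have h3 : Tendsto (fun n : ℕ => ((c.Nn:ℝ≥0∞))⁻¹ ^ n) atTop (𝓝 0) :=
          ENNReal.tendsto_pow_atTop_nhds_zero_of_lt_one h2
        have h4 : Tendsto (fun n : ℕ => (3:ℝ≥0∞)^d * ((c.Nn:ℝ≥0∞)^n)⁻¹) atTop (𝓝 0) := by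
          have h5 := ENNReal.Tendsto.const_mul h3 (Or.inr (by simp : ((3:ℝ≥0∞)^d) ≠ ⊤))
          simpa [ENNReal.inv_pow] using h5
        exact le_antisymm (ge_of_tendsto' h4 hb) zero_le
      simp [Measure.smul_apply, hzero]
    · push_neg at ht0
      have hex : ∃ n : ℕ, (c.α*c.β)^(n+1) < t := by
        obtain ⟨m, hm⟩ := exists_pow_lt_of_lt_one ht0 c.hαβ1
        exact ⟨m, lt_of_le_of_lt
          (pow_le_pow_of_le_one (le_of_lt c.hαβ0) (le_of_lt c.hαβ1) (Nat.le_succ m)) hm⟩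
      set n := Nat.find hex with hn
      have hn1 : (c.α*c.β)^(n+1) < t := Nat.find_spec hex
      have hn2 : t ≤ (c.α * c.β) ^ n := by
        rcases Nat.eq_zero_or_pos n with h0 | hpos
        · rw [h0, pow_zero]
          have h6 := ENNReal.toReal_mono ENNReal.ofReal_ne_top hdiam
          rw [ENNReal.toReal_ofReal (le_of_lt c.hαβ0)] at h6
          linarith [c.hαβ1]
        · by_contra hcon
          push_neg at hcon
          have hfind := Nat.find_min hex (Nat.sub_lt hpos one_pos)
          apply hfind
          have heq : n - 1 + 1 = n := Nat.succ_pred_eq_of_pos hpos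
          rw [heq]
          exact hcon
      have hνE : c.ν E ≤ (3:ℝ≥0∞)^d * ((c.Nn:ℝ≥0∞)^n)⁻¹ :=
        c.nu_le n E (fun x hx y hy => le_trans (hden x hx y hy) hn2)
      have hcalc : coef * ((3:ℝ≥0∞)^d * ((c.Nn:ℝ≥0∞)^n)⁻¹) ≤ ENNReal.ofReal (t ^ s) := by
        have e3 : (3:ℝ≥0∞)^d = ENNReal.ofReal ((3:ℝ)^d) := by
          rw [ENNReal.ofReal_pow (by norm_num : (0:ℝ) ≤ 3)]
          norm_num
        have hNpow : (0:ℝ) < (c.Nn : ℝ)^n := pow_pos hNpos n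
        have eN : ((c.Nn:ℝ≥0∞)^n)⁻¹ = ENNReal.ofReal (((c.Nn:ℝ)^n)⁻¹) := by
          rw [ENNReal.ofReal_inv_of_pos hNpow, ENNReal.ofReal_pow (Nat.cast_nonneg _),
            ENNReal.ofReal_natCast]
        have h3dnn : (0:ℝ) ≤ (3:ℝ)^d := by positivity
        have hcoefnn : (0:ℝ) ≤ (c.α*c.β) ^ s / 3^d :=
          div_nonneg (Real.rpow_nonneg (le_of_lt c.hαβ0) s) h3dnn
        rw [hcoef, e3, eN, ← ENNReal.ofReal_mul h3dnn, ← ENNReal.ofReal_mul hcoefnn]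
        apply ENNReal.ofReal_le_ofReal
        have hxy0 : (0:ℝ) < c.α * c.β := c.hαβ0
        have hstep1 : ((c.Nn:ℝ)^n)⁻¹ ≤ ((c.α*c.β) ^ s)^n := by
          rw [← inv_pow]
          exact pow_le_pow_left₀ (inv_nonneg.mpr (Nat.cast_nonneg _)) hNs n
        have hid : (c.α*c.β) ^ s * ((c.α*c.β) ^ s)^n = ((c.α*c.β) ^ (n+1)) ^ s := by
          rw [← Real.rpow_natCast ((c.α*c.β) ^ s) n, ← Real.rpow_mul (le_of_lt hxy0),
            ← Real.rpow_add hxy0, ← Real.rpow_natCast (c.α*c.β) (n+1),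
            ← Real.rpow_mul (le_of_lt hxy0)]
          congr 1
          push_cast
          ring
        have hfin : ((c.α*c.β) ^ (n+1)) ^ s ≤ t ^ s :=
          Real.rpow_le_rpow (by positivity) (le_of_lt hn1) (le_of_lt hs0)
        have h3d : (0:ℝ) < (3:ℝ)^d := by positivity
        calc (c.α*c.β) ^ s / 3^d * ((3:ℝ)^d * ((c.Nn:ℝ)^n)⁻¹)
            = (c.α*c.β) ^ s * ((c.Nn:ℝ)^n)⁻¹ := by field_simp
          _ ≤ (c.α*c.β) ^ s * ((c.α*c.β) ^ s)^n :=
              mul_le_mul_of_nonneg_left hstep1 (le_of_lt (Real.rpow_pos_of_pos hxy0 s))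
          _ = ((c.α*c.β) ^ (n+1)) ^ s := hid
          _ ≤ t ^ s := hfin
      calc (coef • c.ν) E = coef * c.ν E := by simp [Measure.smul_apply, smul_eq_mul]
        _ ≤ coef * ((3:ℝ≥0∞)^d * ((c.Nn:ℝ≥0∞)^n)⁻¹) := mul_le_mul_right hνE _
        _ ≤ ENNReal.ofReal (t ^ s) := hcalc
        _ = (ENNReal.ofReal t) ^ s := (ENNReal.ofReal_rpow_of_pos ht0).symm
        _ = EMetric.diam E ^ s := by rw [ENNReal.ofReal_toReal htop]
  have hle : coef • c.ν ≤ μH[s] :=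
    Measure.le_hausdorffMeasure s _ (ENNReal.ofReal (c.α*c.β))
      (ENNReal.ofReal_pos.mpr c.hαβ0) hmain
  have hSle := Measure.le_iff'.mp hle c.S
  calc coef = coef * 1 := (mul_one _).symm
    _ ≤ coef * c.ν c.S := mul_le_mul_right c.nu_S _
    _ = (coef • c.ν) c.S := by simp [Measure.smul_apply, smul_eq_mul]
    _ ≤ μH[s] c.S := hSle

end Ctx

end SchmidtProof

open MeasureTheory
open scoped ENNReal NNReal

/-- Any winning set for Schmidt's game in `ℝ^d` has Hausdorff dimension `d`. -/
theorem dimH_eq_of_winning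
    (d : ℕ) (S : Set (Fin d → ℝ)) (h : ∃ α : ℝ, IsAlphaWinning α S) :
    dimH S = d := by
  obtain ⟨α, hα0, hα1, hβs⟩ := h
  have hupper : dimH S ≤ d :=
    le_trans (dimH_mono (Set.subset_univ S)) (le_of_eq (Real.dimH_univ_pi_fin d))
  refine le_antisymm hupper ?_
  rcases Nat.eq_zero_or_pos d with rfl | hd
  · simp
  by_contra hlt
  push_neg at hlt
  obtain ⟨sn, hs1, hs2⟩ := ENNReal.lt_iff_exists_nnreal_btwn.mp hlt
  have hμ0 : μH[(sn:ℝ)] S = 0 := hausdorffMeasure_of_dimH_lt hs1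
  set s : ℝ := (sn : ℝ) with hsdef
  have hs0 : 0 < s := by
    have h1 : (0:ℝ≥0∞) < (sn:ℝ≥0∞) := lt_of_le_of_lt zero_le hs1
    have h2 : (0:ℝ≥0) < sn := by exact_mod_cast h1
    exact_mod_cast h2
  have hsd : s < (d:ℝ) := by
    have h2 : (sn:ℝ≥0∞) < ((d:ℝ≥0):ℝ≥0∞) := by exact_mod_cast hs2
    have h3 : sn < (d:ℝ≥0) := by exact_mod_cast h2
    exact_mod_cast h3
  -- choose β
  set γ : ℝ := (d:ℝ) - s with hγ
  have hγ0 : 0 < γ := by rw [hγ]; linarith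
  set c₁ : ℝ := α ^ s / 3 ^ d with hc₁
  have hc₁0 : 0 < c₁ := div_pos (Real.rpow_pos_of_pos hα0 s) (by positivity)
  set β : ℝ := min (1/6) (c₁ ^ γ⁻¹) with hβ
  have hβ0 : 0 < β := lt_min (by norm_num) (Real.rpow_pos_of_pos hc₁0 _)
  have hβ16 : β ≤ 1/6 := min_le_left _ _
  have hβ1 : β < 1 := lt_of_le_of_lt hβ16 (by norm_num)
  have hβγ : β ^ γ ≤ c₁ := by
    calc β ^ γ ≤ (c₁ ^ γ⁻¹) ^ γ :=
        Real.rpow_le_rpow (le_of_lt hβ0) (min_le_right _ _) (le_of_lt hγ0)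
      _ = c₁ := Real.rpow_inv_rpow (le_of_lt hc₁0) (ne_of_gt hγ0)
  -- choose K
  set K : ℕ := ⌊(2 - 2*β)/(3*β)⌋₊ + 1 with hK
  have h3β : (0:ℝ) < 3*β := by linarith
  have hq0 : (0:ℝ) ≤ (2 - 2*β)/(3*β) := div_nonneg (by linarith) (by linarith)
  have hK1 : 1 ≤ K := Nat.succ_le_succ (Nat.zero_le _)
  have hKgrid : 3 * β * (K:ℝ) ≤ 2 + β := by
    have h1 : ((K:ℕ):ℝ) = (⌊(2 - 2*β)/(3*β)⌋₊ : ℝ) + 1 := by rw [hK]; push_cast; ring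
    have h2 : (⌊(2 - 2*β)/(3*β)⌋₊ : ℝ) ≤ (2 - 2*β)/(3*β) := Nat.floor_le hq0
    rw [h1]
    calc 3*β*((⌊(2 - 2*β)/(3*β)⌋₊ : ℝ)+1) ≤ 3*β*((2-2*β)/(3*β) + 1) := by nlinarith
      _ = 2 + β := by field_simp; ring
  have hKlb : 1/(3*β) ≤ (K:ℝ) := by
    have h2 := Nat.lt_floor_add_one ((2 - 2*β)/(3*β))
    have h4 : 1/(3*β) ≤ (2-2*β)/(3*β) :=
      (div_le_div_iff_of_pos_right h3β).mpr (by linarith)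
    have h5 : ((K:ℕ):ℝ) = (⌊(2 - 2*β)/(3*β)⌋₊ : ℝ) + 1 := by rw [hK]; push_cast; ring
    rw [h5]
    linarith
  -- get the strategy
  obtain ⟨a, hcons, hwin⟩ := hβs β hβ0 hβ1 1 one_pos 0
  set c : SchmidtProof.Ctx d :=
    ⟨S, α, β, K, a, hα0, hα1, hβ0, hβ1, hK1, hKgrid, hcons, hwin⟩ with hc
  have hNval : c.Nn = K ^ d := by
    show Fintype.card (Fin d → Fin K) = K ^ d
    simp [Fintype.card_fun]
  have hK2 : 2 ≤ K := by
    have h6 : (2:ℝ) ≤ 1/(3*β) := by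
      rw [le_one_div (by norm_num) h3β]
      linarith
    have h7 : (2:ℝ) ≤ (K:ℝ) := le_trans h6 hKlb
    exact_mod_cast h7
  have hN2 : 2 ≤ c.Nn := by
    rw [hNval]
    calc 2 = 2^1 := (pow_one 2).symm
      _ ≤ 2^d := Nat.pow_le_pow_right (by norm_num) hd
      _ ≤ K^d := Nat.pow_le_pow_left hK2 d
  -- the exponent inequality
  have hβd : (β:ℝ)^d = β ^ γ * β ^ s := by
    rw [← Real.rpow_natCast β d, show ((d:ℕ):ℝ) = γ + s by rw [hγ]; ring,
      Real.rpow_add hβ0]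
  have h3 : (3*β)^d ≤ (α*β)^s := by
    rw [mul_pow, hβd, Real.mul_rpow (le_of_lt hα0) (le_of_lt hβ0)]
    have h8 : (3:ℝ)^d * β^γ ≤ α^s := by
      have h9 : β^γ * 3^d ≤ α^s := (le_div_iff₀ (by positivity)).mp (hc₁ ▸ hβγ)
      linarith [h9]
    calc (3:ℝ)^d*(β^γ*β^s) = ((3:ℝ)^d*β^γ)*β^s := by ring
      _ ≤ α^s * β^s := mul_le_mul_of_nonneg_right h8 (Real.rpow_nonneg (le_of_lt hβ0) s)
  have hNs : ((c.Nn:ℝ))⁻¹ ≤ (α*β)^s := by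
    rw [hNval]
    have hKpos : (0:ℝ) < (K:ℝ) := by exact_mod_cast hK1
    have hKinv : (K:ℝ)⁻¹ ≤ 3*β := by
      rw [← one_div]
      exact (one_div_le h3β hKpos).mp hKlb
    have h2 : ((K^d : ℕ):ℝ)⁻¹ ≤ (3*β)^d := by
      rw [Nat.cast_pow, ← inv_pow]
      exact pow_le_pow_left₀ (inv_nonneg.mpr (le_of_lt hKpos)) hKinv d
    exact le_trans h2 h3
  -- contradiction
  have hlow := c.hmeas_lower hN2 s hs0 hNs
  have hcS : c.S = S := rfl
  have hcα : c.α = α := rfl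
  have hcβ : c.β = β := rfl
  rw [hcS, hcα, hcβ, hμ0] at hlow
  rw [nonpos_iff_eq_zero, ENNReal.ofReal_eq_zero] at hlow
  have hpos : (0:ℝ) < (α*β)^s / 3^d :=
    div_pos (Real.rpow_pos_of_pos (mul_pos hα0 hβ0) s) (by positivity)
  linarith
end
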